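/- Let k > 3 be odd, let zzc(k) be the word obtained from zz(k−1, k−1) by replacing its last two letters (which are 2, 1) by k, k−1, and let γ be the permutation obtained from zzc(k) by breaking ties. Then some rotation of the permutation (k−1, k−2, …, 2, 1, k) is order-isomorphic to a subsequence of γ; i.e., γ circularly contains the pattern (k−1, k−2, …, 1, k). -/

import Mathlib

/-- The `j`-th run of the zigzag word over alphabet `{1, …, q}`: for odd `j` the odd
numbers in increasing order, for even `j` the even numbers in decreasing order. -/
def zrun (j q : ℕ) : List ℕ :=
  if j % 2 = 1 then (List.range (q + 1)).filter (fun n => n % 2 = 1)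
  else ((List.range (q + 1)).filter (fun n => n % 2 = 0 && n != 0)).reverse

/-- The zigzag word `zz(m, q) = R₁ R₂ ⋯ R_m`. -/
def zz (m q : ℕ) : List ℕ := ((List.range m).map fun j => zrun (j + 1) q).flatten

/-- `zzc(k)`: the zigzag word `zz(k-1, k-1)` (with a trailing `1` appended) whose final
two letters `2, 1` are replaced by `k, k-1`; equivalently, drop the last letter of
`zz(k-1,k-1)` and append `k, k-1`.  E.g. `zzc 5 = [1,3,4,2,1,3,4,5,4]`. -/
def zzc (k : ℕ) : List ℕ := (zz (k - 1) (k - 1)).dropLast ++ [k, k - 1]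

/-- The permutation obtained from the word `ω` by breaking ties: position `i` receives
the rank (starting from 1) of the pair `(ω_i, −i)` in lexicographic order, i.e. the
number of positions `j` with `ω_j < ω_i`, or `ω_j = ω_i` and `j ≥ i`. -/
def breakTies (ω : List ℕ) : List ℕ :=
  ω.mapIdx fun i x =>
    ((ω.mapIdx fun j y => (j, y)).filter fun p => p.2 < x || (p.2 = x && i ≤ p.1)).length

/-- `l` is the one-line notation of a permutation of `{1, …, n}`. -/
def IsPermList (n : ℕ) (l : List ℕ) : Prop := l.Perm ((List.range n).map (· + 1))

/-- The pattern `σ` occurs as an order-isomorphic subsequence of the word `w`: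
there are indices `i₁ < ⋯ < i_k` with `w (i_p) < w (i_q)` exactly when `σ p < σ q`. -/
def OrderIsoContains (w σ : List ℕ) : Prop :=
  ∃ f : Fin σ.length → Fin w.length, StrictMono f ∧
    ∀ p q : Fin σ.length, w.get (f p) < w.get (f q) ↔ σ.get p < σ.get q

lemma breakTies_length (ω : List ℕ) : (breakTies ω).length = ω.length := by
  simp [breakTies]

lemma breakTies_lt (ω : List ℕ) (i j : Fin ω.length) (h : ω.get i < ω.get j) :
    (breakTies ω).get (Fin.cast (breakTies_length ω).symm i) <
      (breakTies ω).get (Fin.cast (breakTies_length ω).symm j) := by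
  have hget : ∀ m : Fin ω.length, (breakTies ω).get (Fin.cast (breakTies_length ω).symm m)
      = ((ω.mapIdx fun j y => (j, y)).filter fun p =>
          p.2 < ω.get m || (p.2 = ω.get m && (m : ℕ) ≤ p.1)).length := by
    intro m
    simp [breakTies]
    rfl
  rw [hget, hget]
  set E := ω.mapIdx fun j y => (j, y) with hE
  have hsub : List.Sublist
      (E.filter fun p => p.2 < ω.get i || (p.2 = ω.get i && (i : ℕ) ≤ p.1))
      (E.filter fun p => p.2 < ω.get j || (p.2 = ω.get j && (j : ℕ) ≤ p.1)) := by
    apply List.monotone_filter_right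
    intro a ha
    simp only [Bool.or_eq_true, decide_eq_true_eq, Bool.and_eq_true] at ha ⊢
    omega
  refine lt_of_le_of_ne hsub.length_le ?_
  intro heq
  have heqf := hsub.eq_of_length heq
  have hmem : ((j : ℕ), ω.get j) ∈ E := by
    have hj : (j : ℕ) < E.length := by simp [hE]
    have hg : E[(j : ℕ)] = ((j : ℕ), ω.get j) := by simp [hE]
    rw [← hg]
    exact List.getElem_mem hj
  have hmem2 : ((j : ℕ), ω.get j) ∈ E.filter fun p =>
      p.2 < ω.get j || (p.2 = ω.get j && (j : ℕ) ≤ p.1) := by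
    rw [List.mem_filter]
    exact ⟨hmem, by simp⟩
  rw [← heqf, List.mem_filter] at hmem2
  have := hmem2.2
  simp only [Bool.or_eq_true, decide_eq_true_eq, Bool.and_eq_true] at this
  omega

lemma zz_succ (t q : ℕ) : zz (t + 1) q = zz t q ++ zrun (t + 1) q := by
  simp [zz, List.range_succ]

lemma zz_decr {q : ℕ} (hq : q % 2 = 0) :
    ∀ t, t ≤ q - 1 → List.Sublist ((List.range t).map (fun i => q - 1 - i)) (zz t q) := by
  intro t
  induction t with
  | zero => intro _; simp
  | succ t ih =>
    intro ht
    rw [zz_succ, List.range_succ, List.map_append]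
    refine List.Sublist.append (ih (by omega)) ?_
    simp only [List.map_cons, List.map_nil]
    rw [List.singleton_sublist]
    unfold zrun
    rcases Nat.mod_two_eq_zero_or_one t with he | ho
    · have h1 : (t + 1) % 2 = 1 := by omega
      rw [if_pos h1]
      simp only [List.mem_filter, List.mem_range, decide_eq_true_eq]
      omega
    · have h1 : ¬ (t + 1) % 2 = 1 := by omega
      rw [if_neg h1]
      simp only [List.mem_reverse, List.mem_filter, List.mem_range, Bool.and_eq_true,
        decide_eq_true_eq, bne_iff_ne, ne_eq]
      omega

/-- For odd `k > 3`, the permutation `γ` obtained by breaking ties from `zzc(k)`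
circularly contains the pattern `(k−1, k−2, …, 2, 1, k)`: some rotation of it is
order-isomorphic to a subsequence of `γ`. -/
theorem gamma_contains_decreasing (k : ℕ) (hk : 3 < k) (hodd : Odd k) :
    ∃ r < k, OrderIsoContains (breakTies (zzc k))
      ((((List.range (k - 1)).reverse.map (· + 1)) ++ [k]).rotate r) := by
  obtain ⟨c, hc⟩ := hodd
  set s : List ℕ := (List.range (k - 2)).map (fun i => k - 2 - i) ++ [k, k - 1] with hs
  -- Step 1: the rotation by 1 equals s
  have hhead : (List.range (k - 1)).reverse.map (· + 1)
      = (k - 1) :: (List.range (k - 2)).map (fun i => k - 2 - i) := by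
    apply List.ext_getElem
    · simp; omega
    · intro i h1 h2
      simp only [List.length_map, List.length_reverse, List.length_range] at h1
      cases i with
      | zero =>
        simp only [List.getElem_map, List.getElem_reverse, List.length_reverse,
          List.length_range, List.getElem_range, List.getElem_cons_zero]
        omega
      | succ i =>
        simp only [List.getElem_map, List.getElem_reverse, List.length_reverse,
          List.length_range, List.getElem_range, List.getElem_cons_succ]
        omega
  have hrot : ((((List.range (k - 1)).reverse.map (· + 1)) ++ [k]).rotate 1) = s := by
    rw [hhead, List.cons_append, List.rotate_cons_succ, List.rotate_zero, hs,
      List.append_assoc, List.singleton_append]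
  -- Step 2: s is a sublist of zzc k
  have hq : (k - 1) % 2 = 0 := by omega
  have hk2 : k - 1 = (k - 2) + 1 := by omega
  have h1 : List.Sublist ((List.range (k - 2)).map (fun i => k - 2 - i)) (zz (k - 2) (k - 1)) := by
    have h0 := zz_decr hq (k - 2) (by omega)
    have he : (List.range (k - 2)).map (fun i => k - 1 - 1 - i)
        = (List.range (k - 2)).map (fun i => k - 2 - i) := by
      apply List.map_congr_left; intro i _; omega
    rwa [he] at h0
  have hzrun_ne : zrun (k - 1) (k - 1) ≠ [] := by
    apply List.ne_nil_of_mem (a := 2)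
    unfold zrun
    rw [if_neg (by omega), List.mem_reverse, List.mem_filter, List.mem_range]
    refine ⟨by omega, ?_⟩
    simp
  have hzz : zz (k - 1) (k - 1) = zz (k - 2) (k - 1) ++ zrun (k - 1) (k - 1) := by
    conv_lhs => rw [hk2, zz_succ]
    rw [← hk2]
  have h2 : List.Sublist (zz (k - 2) (k - 1)) ((zz (k - 1) (k - 1)).dropLast) := by
    rw [hzz, List.dropLast_append_of_ne_nil hzrun_ne]
    exact List.sublist_append_left _ _
  have hsub : List.Sublist s (zzc k) := by
    rw [hs, zzc]
    exact List.Sublist.append (h1.trans h2) (List.Sublist.refl _)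
  -- Step 3: nodup of s
  have hnd : s.Nodup := by
    rw [hs, List.nodup_append]
    refine ⟨?_, ?_, ?_⟩
    · apply List.Nodup.map_on _ List.nodup_range
      intro x hx y hy hxy
      rw [List.mem_range] at hx hy
      omega
    · simp only [List.nodup_cons, List.mem_singleton, List.nodup_nil, and_true,
        List.not_mem_nil, not_false_iff]
      omega
    · intro x hx
      rw [List.mem_map] at hx
      obtain ⟨i, hi, rfl⟩ := hx
      rw [List.mem_range] at hi
      simp only [List.mem_cons, List.not_mem_nil, or_false]
      omega
  -- Step 4: the embedding
  obtain ⟨f, hf⟩ := List.sublist_iff_exists_fin_orderEmbedding_get_eq.mp hsub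
  refine ⟨1, by omega, ?_⟩
  rw [hrot]
  refine ⟨fun p => Fin.cast (breakTies_length (zzc k)).symm (f p), ?_, ?_⟩
  · intro p q hpq
    have hlt := f.strictMono hpq
    simp only [Fin.lt_def, Fin.coe_cast]
    exact hlt
  · intro p q
    constructor
    · intro h
      by_contra hn
      rcases lt_trichotomy (s.get p) (s.get q) with hlt | heq | hgt
      · exact hn hlt
      · have : p = q := hnd.get_inj_iff.mp heq
        subst this
        exact lt_irrefl _ h
      · have := breakTies_lt (zzc k) (f q) (f p) (by rw [← hf q, ← hf p]; exact hgt)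
        exact absurd h (lt_asymm this)
    · intro h
      exact breakTies_lt (zzc k) (f p) (f q) (by rw [← hf p, ← hf q]; exact h)
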